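/- Let p_z ∈ (0,1), ω ≥ 0, C_u ≥ 0, define J(Ω) = ((1−p_z)/(Ω(1−p_z)+p_z)) · ( (Ω² − Ω)/2 + (Ω + ω·C_u)/(1−p_z) + p_z/(1−p_z)² ), and set Ω* = (√(p_z + 2ω·C_u·(1−p_z)) − p_z)/(1−p_z). Then Ω* globally minimizes J over the interval (−p_z/(1−p_z), ∞): for every real Ω > −p_z/(1−p_z), J(Ω) ≥ J(Ω*). -/

import Mathlib

/-- Theorem 2 of the paper: the threshold
`Ω* = (√(p_z + 2ω·C_u·(1−p_z)) − p_z)/(1−p_z)` globally minimizes the total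
average cost `J` over the interval `(−p_z/(1−p_z), ∞)`. -/
theorem threshold_minimizes_cost (p_z ω C_u : ℝ)
    (hpz0 : 0 < p_z) (hpz1 : p_z < 1) (hω : 0 ≤ ω) (hCu : 0 ≤ C_u)
    (J : ℝ → ℝ)
    (hJ : ∀ Ω : ℝ, J Ω = (1 - p_z) / (Ω * (1 - p_z) + p_z) *
      ((Ω ^ 2 - Ω) / 2 + (Ω + ω * C_u) / (1 - p_z) + p_z / (1 - p_z) ^ 2))
    (Ωstar : ℝ)
    (hΩstar : Ωstar = (Real.sqrt (p_z + 2 * ω * C_u * (1 - p_z)) - p_z) / (1 - p_z)) :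
    ∀ Ω : ℝ, -p_z / (1 - p_z) < Ω → J Ωstar ≤ J Ω := by
  set q : ℝ := 1 - p_z with hqdef
  have hq : 0 < q := by simp [hqdef]; linarith
  set s : ℝ := Real.sqrt (p_z + 2 * ω * C_u * (1 - p_z)) with hsdef
  have harg : (0:ℝ) ≤ p_z + 2 * ω * C_u * (1 - p_z) := by positivity
  have hs2 : s ^ 2 = p_z + 2 * ω * C_u * q := by
    rw [hsdef, Real.sq_sqrt harg]
  have hs0 : 0 < s := by
    rw [hsdef]
    refine Real.sqrt_pos.mpr ?_
    nlinarith [mul_nonneg (mul_nonneg (by linarith : (0:ℝ) ≤ 2*ω) hCu) (by linarith : (0:ℝ) ≤ 1 - p_z)]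
  -- key identity
  have key : ∀ Ω : ℝ, 0 < Ω * q + p_z →
      J Ω = ((Ω * q + p_z) ^ 2 + q * (Ω * q + p_z) + s ^ 2) / (2 * q * (Ω * q + p_z)) := by
    intro Ω ht
    rw [hJ, hs2]
    have ht' : Ω * q + p_z ≠ 0 := ne_of_gt ht
    have hq' : q ≠ 0 := ne_of_gt hq
    rw [hqdef] at ht' hq' ⊢
    field_simp
    ring
  -- value at Ωstar
  have htstar : Ωstar * q + p_z = s := by
    rw [hΩstar]
    field_simp
    ring
  intro Ω hΩ
  have ht : 0 < Ω * q + p_z := by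
    rw [div_lt_iff₀ hq] at hΩ
    linarith
  have hJstar : J Ωstar = (s ^ 2 + q * s + s ^ 2) / (2 * q * s) := by
    rw [key Ωstar (by rw [htstar]; exact hs0), htstar]
  rw [hJstar, key Ω ht]
  rw [div_le_div_iff₀ (by positivity) (by positivity)]
  nlinarith [sq_nonneg (Ω * q + p_z - s), mul_pos hs0 ht, sq_nonneg (Ω * q + p_z - s), mul_nonneg hs0.le (sq_nonneg (Ω * q + p_z - s))]
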